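/- Let (A,[·,·],α) be a finite-dimensional multiplicative Hom-Leibniz algebra over a field K with α² = id, and suppose {·,·} is a multiplicative Hom-Leibniz algebra structure on the dual space A* with structure map α* (the transpose of α) satisfying (α*)² = id. Then the following are equivalent: (i) the direct sum A ⊕ A*, equipped with the bracket [x+a*, y+b*]' = ([x,y] + L*_{{,}}(a*)y + (−L*_{{,}}−R*_{{,}})(b*)x) + ({a*,b*} + L*_{[,]}(x)b* + (−L*_{[,]}−R*_{[,]})(y)a*) and the linear map Φ = α⊕α*, is a Hom-Leibniz algebra for which the bilinear form B(x+a*, y+b*) = ⟨a*,y⟩ − ⟨b*,x⟩ is Φ-invariant, i.e. B([Φ(u),Φ(w)]' + [Φ(w),Φ(u)]', Φ(v)) = B(Φ(u), [Φ(v),Φ(w)]') for all u,v,w ∈ A ⊕ A* (the standard Manin triple); (ii) (A, A*, L*_{[,]}, −L*_{[,]}−R*_{[,]}, α*, L*_{{,}}, −L*_{{,}}−R*_{{,}}, α) is a matched pair of Hom-Leibniz algebras. -/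

import Mathlib

/-- A Hom-Leibniz algebra structure. -/
def HomLeibniz {K A : Type*} [Field K] [AddCommGroup A] [Module K A]
    (br : A →ₗ[K] A →ₗ[K] A) (α : A →ₗ[K] A) : Prop :=
  ∀ x y z : A, br (α x) (br y z) = br (br x y) (α z) + br (α y) (br x z)

/-- A bimodule `(l, r, β, V)` of a Hom-Leibniz algebra `(A, br, α)`. -/
def HomLeibnizBimodule {K A V : Type*} [Field K] [AddCommGroup A] [Module K A]
    [AddCommGroup V] [Module K V]
    (br : A →ₗ[K] A →ₗ[K] A) (α : A →ₗ[K] A)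
    (l r : A →ₗ[K] V →ₗ[K] V) (β : V →ₗ[K] V) : Prop :=
  (∀ x y v, l (α x) (l y v) = l (br x y) (β v) + l (α y) (l x v)) ∧
  (∀ x y v, l (α x) (r y v) = r (α y) (l x v) + r (br x y) (β v)) ∧
  (∀ x y v, r (br x y) (β v) = r (α y) (r x v) + l (α x) (r y v)) ∧
  (∀ x v, β (l x v) = l (α x) (β v)) ∧
  (∀ x v, β (r x v) = r (α x) (β v))

/-- A matched pair `(A, B, l_A, r_A, β, l_B, r_B, α)` of Hom-Leibniz algebras. -/
def HomLeibnizMatchedPair {K A B : Type*} [Field K] [AddCommGroup A] [Module K A]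
    [AddCommGroup B] [Module K B]
    (brA : A →ₗ[K] A →ₗ[K] A) (αA : A →ₗ[K] A)
    (brB : B →ₗ[K] B →ₗ[K] B) (αB : B →ₗ[K] B)
    (lA rA : A →ₗ[K] B →ₗ[K] B) (lB rB : B →ₗ[K] A →ₗ[K] A) : Prop :=
  HomLeibniz brA αA ∧ HomLeibniz brB αB ∧
  HomLeibnizBimodule brA αA lA rA αB ∧
  HomLeibnizBimodule brB αB lB rB αA ∧
  (∀ (x : A) (a b : B), lA (αA x) (brB a b) =
      lA (rB a x) (αB b) + rA (rB b x) (αB a) +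
        brB (lA x a) (αB b) + brB (αB a) (lA x b)) ∧
  (∀ (x : A) (a b : B), brB (αB a) (lA x b) + rA (rB b x) (αB a) =
      brB (rA x a) (αB b) + lA (lB a x) (αB b) + lA (αA x) (brB a b)) ∧
  (∀ (x : A) (a b : B), brB (αB a) (rA x b) + rA (lB b x) (αB a) =
      rA (αA x) (brB a b) + brB (αB b) (rA x a) + rA (lB a x) (αB b)) ∧
  (∀ (x y : A) (a : B), lB (αB a) (brA x y) =
      lB (rA x a) (αA y) + rB (rA y a) (αA x) +
        brA (lB a x) (αA y) + brA (αA x) (lB a y)) ∧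
  (∀ (x y : A) (a : B), brA (αA x) (lB a y) + rB (rA y a) (αA x) =
      brA (rB a x) (αA y) + lB (lA x a) (αA y) + lB (αB a) (brA x y)) ∧
  (∀ (x y : A) (a : B), brA (αA x) (rB a y) + rB (lA y a) (αA x) =
      rB (αB a) (brA x y) + brA (αA y) (rB a x) + rB (lA x a) (αA y))

set_option maxHeartbeats 4000000 in
/-- for a finite-dimensional involutive multiplicative Hom-Leibniz
algebra `(A, br, α)` and an involutive multiplicative Hom-Leibniz structure
`(brD, αD)` on the dual space `A* = A →ₗ[K] K` (with `αD` the transpose of `α`),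
the standard Manin triple condition on `A ⊕ A*` is equivalent to
`(A, A*, L*, −L*−R*, α*, L*, −L*−R*, α)` being a matched pair of
Hom-Leibniz algebras. -/
theorem standard_manin_triple_iff_matchedPair
    {K A : Type*} [Field K] [AddCommGroup A] [Module K A] [FiniteDimensional K A]
    (br : A →ₗ[K] A →ₗ[K] A) (α : A →ₗ[K] A)
    (hA : HomLeibniz br α)
    (hmul : ∀ x y : A, α (br x y) = br (α x) (α y))
    (hinv : α ∘ₗ α = LinearMap.id)
    (brD : (A →ₗ[K] K) →ₗ[K] (A →ₗ[K] K) →ₗ[K] (A →ₗ[K] K))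
    (αD : (A →ₗ[K] K) →ₗ[K] (A →ₗ[K] K))
    (hαD : ∀ (a : A →ₗ[K] K) (x : A), αD a x = a (α x))
    (hD : HomLeibniz brD αD)
    (hmulD : ∀ a b : A →ₗ[K] K, αD (brD a b) = brD (αD a) (αD b))
    (hinvD : αD ∘ₗ αD = LinearMap.id)
    -- the dual operators, characterized by their defining pairing identities
    (La Ra : A →ₗ[K] (A →ₗ[K] K) →ₗ[K] (A →ₗ[K] K))
    (hLa : ∀ (x y : A) (a : A →ₗ[K] K), La x a y = -(a (br x y)))
    (hRa : ∀ (x y : A) (a : A →ₗ[K] K), Ra x a y = -(a (br y x)))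
    (Lb Rb : (A →ₗ[K] K) →ₗ[K] A →ₗ[K] A)
    (hLb : ∀ (a b : A →ₗ[K] K) (x : A), b (Lb a x) = -(brD a b x))
    (hRb : ∀ (a b : A →ₗ[K] K) (x : A), b (Rb a x) = -(brD b a x)) :
    -- the bracket of the standard Manin triple on `A ⊕ A*`
    let brP : A × (A →ₗ[K] K) → A × (A →ₗ[K] K) → A × (A →ₗ[K] K) := fun p q =>
      (br p.1 q.1 + Lb p.2 q.1 + (-(Lb q.2 p.1) - Rb q.2 p.1),
       brD p.2 q.2 + La p.1 q.2 + (-(La q.1 p.2) - Ra q.1 p.2))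
    let Φ : A × (A →ₗ[K] K) → A × (A →ₗ[K] K) := fun p => (α p.1, αD p.2)
    let Bf : A × (A →ₗ[K] K) → A × (A →ₗ[K] K) → K := fun p q => p.2 q.1 - q.2 p.1
    -- (i): `A ⊕ A*` is a Hom-Leibniz algebra and the bilinear form is invariant
    ((∀ u w z : A × (A →ₗ[K] K),
        brP (Φ u) (brP w z) = brP (brP u w) (Φ z) + brP (Φ w) (brP u z)) ∧
      (∀ u v w : A × (A →ₗ[K] K),
        Bf (brP (Φ u) (Φ w) + brP (Φ w) (Φ u)) (Φ v) = Bf (Φ u) (brP (Φ v) (Φ w))))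
    ↔
    -- (ii): matched pair
    HomLeibnizMatchedPair br α brD αD La
      (@HSub.hSub _ _ _ (@instHSub _ (@LinearMap.instSub K K A ((A →ₗ[K] K) →ₗ[K] (A →ₗ[K] K)) _ _ _ _ _ _ _))
        (@Neg.neg _ (@LinearMap.instNeg K K A ((A →ₗ[K] K) →ₗ[K] (A →ₗ[K] K)) _ _ _ _ _ _ _) La) Ra)
      Lb (-Lb - Rb) := by

  intro brP Φ Bf
  have hLR : ∀ (x : A) (v : A →ₗ[K] K),
      (@HSub.hSub _ _ _ (@instHSub _ (@LinearMap.instSub K K A ((A →ₗ[K] K) →ₗ[K] (A →ₗ[K] K)) _ _ _ _ _ _ _))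
        (@Neg.neg _ (@LinearMap.instNeg K K A ((A →ₗ[K] K) →ₗ[K] (A →ₗ[K] K)) _ _ _ _ _ _ _) La) Ra) x v
        = -(La x v) - Ra x v := fun _ _ => rfl
  have hbrP : ∀ p q : A × (A →ₗ[K] K), brP p q =
      (br p.1 q.1 + Lb p.2 q.1 + (-(Lb q.2 p.1) - Rb q.2 p.1),
       brD p.2 q.2 + La p.1 q.2 + (-(La q.1 p.2) - Ra q.1 p.2)) := fun p q => rfl
  have hΦ : ∀ p : A × (A →ₗ[K] K), Φ p = (α p.1, αD p.2) := fun p => rfl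
  have hBf : ∀ p q : A × (A →ₗ[K] K), Bf p q = p.2 q.1 - q.2 p.1 := fun p q => rfl
  have hαα : ∀ x : A, α (α x) = x := fun x => LinearMap.congr_fun hinv x
  have hααD : ∀ a : A →ₗ[K] K, αD (αD a) = a := fun a => LinearMap.congr_fun hinvD a
  have sep : ∀ v w : A, (∀ f : A →ₗ[K] K, f v = f w) → v = w := by
    intro v w h
    rw [← sub_eq_zero, ← Module.forall_dual_apply_eq_zero_iff K (v - w)]
    intro φ
    simp [map_sub, h φ]
  have hLaα : ∀ (x : A) (v : A →ₗ[K] K), αD (La x v) = La (α x) (αD v) := by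
    intro x v; ext w
    simp only [hαD, hLa, hmul, hαα]
  have hRaα : ∀ (x : A) (v : A →ₗ[K] K), αD (Ra x v) = Ra (α x) (αD v) := by
    intro x v; ext w
    simp only [hαD, hRa, hmul, hαα]
  have hbrDinv : ∀ (a b : A →ₗ[K] K) (x : A), brD (αD a) b (α x) = brD a (αD b) x := by
    intro a b x
    have h1 : brD (αD a) (αD (αD b)) = αD (brD a (αD b)) := (hmulD a (αD b)).symm
    rw [hααD] at h1
    rw [h1, hαD, hαα]
  have hbrDinv2 : ∀ (a b : A →ₗ[K] K) (x : A), brD a (αD b) (α x) = brD (αD a) b x := by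
    intro a b x
    have h1 : brD (αD (αD a)) (αD b) = αD (brD (αD a) b) := (hmulD (αD a) b).symm
    rw [hααD] at h1
    rw [h1, hαD, hαα]
  have hLbα : ∀ (a : A →ₗ[K] K) (x : A), α (Lb a x) = Lb (αD a) (α x) := by
    intro a x; apply sep; intro f
    have h1 : f (α (Lb a x)) = (αD f) (Lb a x) := (hαD f _).symm
    rw [h1]
    simp only [hLb, hbrDinv]
  have hRbα : ∀ (a : A →ₗ[K] K) (x : A), α (Rb a x) = Rb (αD a) (α x) := by
    intro a x; apply sep; intro f
    have h1 : f (α (Rb a x)) = (αD f) (Rb a x) := (hαD f _).symm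
    rw [h1]
    simp only [hRb, hbrDinv2]
  constructor
  · rintro ⟨hL, -⟩
    refine ⟨hA, hD, ⟨?_, ?_, ?_, ?_, ?_⟩, ⟨?_, ?_, ?_, ?_, ?_⟩, ?_, ?_, ?_, ?_, ?_, ?_⟩
    -- bimodule on A* axiom 1
    · intro x y v
      have h := hL (x, (0 : A →ₗ[K] K)) (y, (0 : A →ₗ[K] K)) ((0 : A), v)
      simp only [hbrP, hΦ, map_zero, LinearMap.zero_apply, add_zero, zero_add, neg_zero,
        sub_zero, zero_sub, map_add, map_sub, map_neg, LinearMap.add_apply,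
        LinearMap.sub_apply, LinearMap.neg_apply, Prod.mk_add_mk, Prod.mk.injEq] at h
      obtain ⟨-, h2⟩ := h
      try simp only [hLR, LinearMap.sub_apply, LinearMap.neg_apply]
      rw [← sub_eq_zero] at h2 ⊢
      rw [← h2]; try abel
    -- bimodule on A* axiom 2
    · intro x y v
      have h := hL (x, (0 : A →ₗ[K] K)) ((0 : A), v) (y, (0 : A →ₗ[K] K))
      simp only [hbrP, hΦ, map_zero, LinearMap.zero_apply, add_zero, zero_add, neg_zero,
        sub_zero, zero_sub, map_add, map_sub, map_neg, LinearMap.add_apply,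
        LinearMap.sub_apply, LinearMap.neg_apply, Prod.mk_add_mk, Prod.mk.injEq] at h
      obtain ⟨-, h2⟩ := h
      try simp only [hLR, LinearMap.sub_apply, LinearMap.neg_apply, map_add, map_sub, map_neg,
        LinearMap.add_apply]
      rw [← sub_eq_zero] at h2 ⊢
      rw [← h2]; try abel
    -- bimodule on A* axiom 3
    · intro x y v
      have h := hL ((0 : A), v) (x, (0 : A →ₗ[K] K)) (y, (0 : A →ₗ[K] K))
      simp only [hbrP, hΦ, map_zero, LinearMap.zero_apply, add_zero, zero_add, neg_zero,
        sub_zero, zero_sub, map_add, map_sub, map_neg, LinearMap.add_apply,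
        LinearMap.sub_apply, LinearMap.neg_apply, Prod.mk_add_mk, Prod.mk.injEq] at h
      obtain ⟨-, h2⟩ := h
      try simp only [hLR, LinearMap.sub_apply, LinearMap.neg_apply, map_add, map_sub, map_neg,
        LinearMap.add_apply]
      rw [← sub_eq_zero] at h2 ⊢
      rw [← h2]; try abel
    -- bimodule on A* axiom 4
    · intro x v
      exact hLaα x v
    -- bimodule on A* axiom 5
    · intro x v
      simp only [hLR, LinearMap.sub_apply, LinearMap.neg_apply, map_sub, map_neg, hLaα, hRaα]
    -- bimodule on A axiom 1
    · intro a b v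
      have h := hL ((0 : A), a) ((0 : A), b) (v, (0 : A →ₗ[K] K))
      simp only [hbrP, hΦ, map_zero, LinearMap.zero_apply, add_zero, zero_add, neg_zero,
        sub_zero, zero_sub, map_add, map_sub, map_neg, LinearMap.add_apply,
        LinearMap.sub_apply, LinearMap.neg_apply, Prod.mk_add_mk, Prod.mk.injEq] at h
      obtain ⟨h1, -⟩ := h
      try simp only [hLR, LinearMap.sub_apply, LinearMap.neg_apply, map_add, map_sub, map_neg,
        LinearMap.add_apply]
      rw [← sub_eq_zero] at h1 ⊢
      rw [← h1]; try abel
    -- bimodule on A axiom 2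
    · intro a b v
      have h := hL ((0 : A), a) (v, (0 : A →ₗ[K] K)) ((0 : A), b)
      simp only [hbrP, hΦ, map_zero, LinearMap.zero_apply, add_zero, zero_add, neg_zero,
        sub_zero, zero_sub, map_add, map_sub, map_neg, LinearMap.add_apply,
        LinearMap.sub_apply, LinearMap.neg_apply, Prod.mk_add_mk, Prod.mk.injEq] at h
      obtain ⟨h1, -⟩ := h
      try simp only [hLR, LinearMap.sub_apply, LinearMap.neg_apply, map_add, map_sub, map_neg,
        LinearMap.add_apply]
      rw [← sub_eq_zero] at h1 ⊢
      rw [← h1]; try abel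
    -- bimodule on A axiom 3
    · intro a b v
      have h := hL (v, (0 : A →ₗ[K] K)) ((0 : A), a) ((0 : A), b)
      simp only [hbrP, hΦ, map_zero, LinearMap.zero_apply, add_zero, zero_add, neg_zero,
        sub_zero, zero_sub, map_add, map_sub, map_neg, LinearMap.add_apply,
        LinearMap.sub_apply, LinearMap.neg_apply, Prod.mk_add_mk, Prod.mk.injEq] at h
      obtain ⟨h1, -⟩ := h
      try simp only [hLR, LinearMap.sub_apply, LinearMap.neg_apply, map_add, map_sub, map_neg,
        LinearMap.add_apply]
      rw [← sub_eq_zero] at h1 ⊢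
      rw [← h1]; try abel
    -- bimodule on A axiom 4
    · intro a v
      exact hLbα a v
    -- bimodule on A axiom 5
    · intro a v
      simp only [hLR, LinearMap.sub_apply, LinearMap.neg_apply, map_sub, map_neg, hLbα, hRbα]
    -- MP1
    · intro x a b
      have h := hL (x, (0 : A →ₗ[K] K)) ((0 : A), a) ((0 : A), b)
      simp only [hbrP, hΦ, map_zero, LinearMap.zero_apply, add_zero, zero_add, neg_zero,
        sub_zero, zero_sub, map_add, map_sub, map_neg, LinearMap.add_apply,
        LinearMap.sub_apply, LinearMap.neg_apply, Prod.mk_add_mk, Prod.mk.injEq] at h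
      obtain ⟨-, h2⟩ := h
      try simp only [hLR, LinearMap.sub_apply, LinearMap.neg_apply, map_add, map_sub, map_neg,
        LinearMap.add_apply]
      rw [← sub_eq_zero] at h2 ⊢
      rw [← h2]; try abel
    -- MP2
    · intro x a b
      have h := hL ((0 : A), a) (x, (0 : A →ₗ[K] K)) ((0 : A), b)
      simp only [hbrP, hΦ, map_zero, LinearMap.zero_apply, add_zero, zero_add, neg_zero,
        sub_zero, zero_sub, map_add, map_sub, map_neg, LinearMap.add_apply,
        LinearMap.sub_apply, LinearMap.neg_apply, Prod.mk_add_mk, Prod.mk.injEq] at h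
      obtain ⟨-, h2⟩ := h
      try simp only [hLR, LinearMap.sub_apply, LinearMap.neg_apply, map_add, map_sub, map_neg,
        LinearMap.add_apply]
      rw [← sub_eq_zero] at h2 ⊢
      rw [← h2]; try abel
    -- MP3
    · intro x a b
      have h := hL ((0 : A), a) ((0 : A), b) (x, (0 : A →ₗ[K] K))
      simp only [hbrP, hΦ, map_zero, LinearMap.zero_apply, add_zero, zero_add, neg_zero,
        sub_zero, zero_sub, map_add, map_sub, map_neg, LinearMap.add_apply,
        LinearMap.sub_apply, LinearMap.neg_apply, Prod.mk_add_mk, Prod.mk.injEq] at h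
      obtain ⟨-, h2⟩ := h
      try simp only [hLR, LinearMap.sub_apply, LinearMap.neg_apply, map_add, map_sub, map_neg,
        LinearMap.add_apply]
      rw [← sub_eq_zero] at h2 ⊢
      rw [← h2]; try abel
    -- MP4
    · intro x y a
      have h := hL ((0 : A), a) (x, (0 : A →ₗ[K] K)) (y, (0 : A →ₗ[K] K))
      simp only [hbrP, hΦ, map_zero, LinearMap.zero_apply, add_zero, zero_add, neg_zero,
        sub_zero, zero_sub, map_add, map_sub, map_neg, LinearMap.add_apply,
        LinearMap.sub_apply, LinearMap.neg_apply, Prod.mk_add_mk, Prod.mk.injEq] at h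
      obtain ⟨h1, -⟩ := h
      try simp only [hLR, LinearMap.sub_apply, LinearMap.neg_apply, map_add, map_sub, map_neg,
        LinearMap.add_apply]
      rw [← sub_eq_zero] at h1 ⊢
      rw [← h1]; try abel
    -- MP5
    · intro x y a
      have h := hL (x, (0 : A →ₗ[K] K)) ((0 : A), a) (y, (0 : A →ₗ[K] K))
      simp only [hbrP, hΦ, map_zero, LinearMap.zero_apply, add_zero, zero_add, neg_zero,
        sub_zero, zero_sub, map_add, map_sub, map_neg, LinearMap.add_apply,
        LinearMap.sub_apply, LinearMap.neg_apply, Prod.mk_add_mk, Prod.mk.injEq] at h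
      obtain ⟨h1, -⟩ := h
      try simp only [hLR, LinearMap.sub_apply, LinearMap.neg_apply, map_add, map_sub, map_neg,
        LinearMap.add_apply]
      rw [← sub_eq_zero] at h1 ⊢
      rw [← h1]; try abel
    -- MP6
    · intro x y a
      have h := hL (x, (0 : A →ₗ[K] K)) (y, (0 : A →ₗ[K] K)) ((0 : A), a)
      simp only [hbrP, hΦ, map_zero, LinearMap.zero_apply, add_zero, zero_add, neg_zero,
        sub_zero, zero_sub, map_add, map_sub, map_neg, LinearMap.add_apply,
        LinearMap.sub_apply, LinearMap.neg_apply, Prod.mk_add_mk, Prod.mk.injEq] at h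
      obtain ⟨h1, -⟩ := h
      try simp only [hLR, LinearMap.sub_apply, LinearMap.neg_apply, map_add, map_sub, map_neg,
        LinearMap.add_apply]
      rw [← sub_eq_zero] at h1 ⊢
      rw [← h1]; try abel
  · rintro ⟨-, -, hbmA, hbmB, mp1, mp2, mp3, mp4, mp5, mp6⟩
    obtain ⟨bA1, bA2, bA3, -, -⟩ := hbmA
    obtain ⟨bB1, bB2, bB3, -, -⟩ := hbmB
    have brP_addl : ∀ p p' q, brP (p + p') q = brP p q + brP p' q := by
      intro p p' q
      simp only [hbrP, Prod.fst_add, Prod.snd_add, map_add, LinearMap.add_apply,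
        Prod.mk_add_mk, Prod.mk.injEq]
      constructor <;> abel
    have brP_addr : ∀ p q q', brP p (q + q') = brP p q + brP p q' := by
      intro p q q'
      simp only [hbrP, Prod.fst_add, Prod.snd_add, map_add, LinearMap.add_apply,
        Prod.mk_add_mk, Prod.mk.injEq]
      constructor <;> abel
    have Φ_add : ∀ p q, Φ (p + q) = Φ p + Φ q := by
      intro p q
      simp only [hΦ, Prod.fst_add, Prod.snd_add, map_add, Prod.mk_add_mk]
    constructor
    · -- the Hom-Leibniz identity on the double
      have Paddu : ∀ u u' w z,
          brP (Φ u) (brP w z) = brP (brP u w) (Φ z) + brP (Φ w) (brP u z) →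
          brP (Φ u') (brP w z) = brP (brP u' w) (Φ z) + brP (Φ w) (brP u' z) →
          brP (Φ (u + u')) (brP w z)
            = brP (brP (u + u') w) (Φ z) + brP (Φ w) (brP (u + u') z) := by
        intro u u' w z h1 h2
        simp only [Φ_add, brP_addl, brP_addr, h1, h2]
        abel
      have Paddw : ∀ u w w' z,
          brP (Φ u) (brP w z) = brP (brP u w) (Φ z) + brP (Φ w) (brP u z) →
          brP (Φ u) (brP w' z) = brP (brP u w') (Φ z) + brP (Φ w') (brP u z) →
          brP (Φ u) (brP (w + w') z)
            = brP (brP u (w + w')) (Φ z) + brP (Φ (w + w')) (brP u z) := by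
        intro u w w' z h1 h2
        simp only [Φ_add, brP_addl, brP_addr, h1, h2]
        abel
      have Paddz : ∀ u w z z',
          brP (Φ u) (brP w z) = brP (brP u w) (Φ z) + brP (Φ w) (brP u z) →
          brP (Φ u) (brP w z') = brP (brP u w) (Φ z') + brP (Φ w) (brP u z') →
          brP (Φ u) (brP w (z + z'))
            = brP (brP u w) (Φ (z + z')) + brP (Φ w) (brP u (z + z')) := by
        intro u w z z' h1 h2
        simp only [Φ_add, brP_addl, brP_addr, h1, h2]
        abel
      have pAAA : ∀ (x y z : A),
          brP (Φ (x, 0)) (brP (y, 0) (z, 0))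
            = brP (brP (x, 0) (y, 0)) (Φ (z, 0)) + brP (Φ (y, 0)) (brP (x, 0) (z, 0)) := by
        intro x y z
        simp only [hbrP, hΦ, map_zero, LinearMap.zero_apply, add_zero, zero_add, neg_zero,
          sub_zero, zero_sub, map_add, map_sub, map_neg, LinearMap.add_apply,
          LinearMap.sub_apply, LinearMap.neg_apply, Prod.mk_add_mk, Prod.mk.injEq]
        exact ⟨hA x y z, by trivial⟩
      have pDDD : ∀ (a b c : A →ₗ[K] K),
          brP (Φ ((0 : A), a)) (brP ((0 : A), b) ((0 : A), c))
            = brP (brP ((0 : A), a) ((0 : A), b)) (Φ ((0 : A), c))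
              + brP (Φ ((0 : A), b)) (brP ((0 : A), a) ((0 : A), c)) := by
        intro a b c
        simp only [hbrP, hΦ, map_zero, LinearMap.zero_apply, add_zero, zero_add, neg_zero,
          sub_zero, zero_sub, map_add, map_sub, map_neg, LinearMap.add_apply,
          LinearMap.sub_apply, LinearMap.neg_apply, Prod.mk_add_mk, Prod.mk.injEq]
        exact ⟨by trivial, hD a b c⟩
      have pAAD : ∀ (x y : A) (c : A →ₗ[K] K),
          brP (Φ (x, 0)) (brP (y, 0) ((0 : A), c))
            = brP (brP (x, 0) (y, 0)) (Φ ((0 : A), c))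
              + brP (Φ (y, 0)) (brP (x, 0) ((0 : A), c)) := by
        intro x y c
        have h1 := mp6 x y c
        have h2 := bA1 x y c
        simp only [hLR, LinearMap.sub_apply, LinearMap.neg_apply, map_add, map_sub, map_neg,
          LinearMap.add_apply] at h1 h2
        simp only [hbrP, hΦ, map_zero, LinearMap.zero_apply, add_zero, zero_add, neg_zero,
          sub_zero, zero_sub, map_add, map_sub, map_neg, LinearMap.add_apply,
          LinearMap.sub_apply, LinearMap.neg_apply, Prod.mk_add_mk, Prod.mk.injEq]
        constructor
        · rw [← sub_eq_zero] at h1 ⊢; rw [← h1]; try abel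
        · rw [← sub_eq_zero] at h2 ⊢; rw [← h2]; try abel
      have pADA : ∀ (x y : A) (b : A →ₗ[K] K),
          brP (Φ (x, 0)) (brP ((0 : A), b) (y, 0))
            = brP (brP (x, 0) ((0 : A), b)) (Φ (y, 0))
              + brP (Φ ((0 : A), b)) (brP (x, 0) (y, 0)) := by
        intro x y b
        have h1 := mp5 x y b
        have h2 := bA2 x y b
        simp only [hLR, LinearMap.sub_apply, LinearMap.neg_apply, map_add, map_sub, map_neg,
          LinearMap.add_apply] at h1 h2
        simp only [hbrP, hΦ, map_zero, LinearMap.zero_apply, add_zero, zero_add, neg_zero,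
          sub_zero, zero_sub, map_add, map_sub, map_neg, LinearMap.add_apply,
          LinearMap.sub_apply, LinearMap.neg_apply, Prod.mk_add_mk, Prod.mk.injEq]
        constructor
        · rw [← sub_eq_zero] at h1 ⊢; rw [← h1]; try abel
        · rw [← sub_eq_zero] at h2 ⊢; rw [← h2]; try abel
      have pDAA : ∀ (x y : A) (a : A →ₗ[K] K),
          brP (Φ ((0 : A), a)) (brP (x, 0) (y, 0))
            = brP (brP ((0 : A), a) (x, 0)) (Φ (y, 0))
              + brP (Φ (x, 0)) (brP ((0 : A), a) (y, 0)) := by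
        intro x y a
        have h1 := mp4 x y a
        have h2 := bA3 x y a
        simp only [hLR, LinearMap.sub_apply, LinearMap.neg_apply, map_add, map_sub, map_neg,
          LinearMap.add_apply] at h1 h2
        simp only [hbrP, hΦ, map_zero, LinearMap.zero_apply, add_zero, zero_add, neg_zero,
          sub_zero, zero_sub, map_add, map_sub, map_neg, LinearMap.add_apply,
          LinearMap.sub_apply, LinearMap.neg_apply, Prod.mk_add_mk, Prod.mk.injEq]
        constructor
        · rw [← sub_eq_zero] at h1 ⊢; rw [← h1]; try abel
        · rw [← sub_eq_zero] at h2 ⊢; rw [← h2]; try abel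
      have pDDA : ∀ (a b : A →ₗ[K] K) (x : A),
          brP (Φ ((0 : A), a)) (brP ((0 : A), b) (x, 0))
            = brP (brP ((0 : A), a) ((0 : A), b)) (Φ (x, 0))
              + brP (Φ ((0 : A), b)) (brP ((0 : A), a) (x, 0)) := by
        intro a b x
        have h1 := bB1 a b x
        have h2 := mp3 x a b
        simp only [hLR, LinearMap.sub_apply, LinearMap.neg_apply, map_add, map_sub, map_neg,
          LinearMap.add_apply] at h1 h2
        simp only [hbrP, hΦ, map_zero, LinearMap.zero_apply, add_zero, zero_add, neg_zero,
          sub_zero, zero_sub, map_add, map_sub, map_neg, LinearMap.add_apply,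
          LinearMap.sub_apply, LinearMap.neg_apply, Prod.mk_add_mk, Prod.mk.injEq]
        constructor
        · rw [← sub_eq_zero] at h1 ⊢; rw [← h1]; try abel
        · rw [← sub_eq_zero] at h2 ⊢; rw [← h2]; try abel
      have pDAD : ∀ (a b : A →ₗ[K] K) (x : A),
          brP (Φ ((0 : A), a)) (brP (x, 0) ((0 : A), b))
            = brP (brP ((0 : A), a) (x, 0)) (Φ ((0 : A), b))
              + brP (Φ (x, 0)) (brP ((0 : A), a) ((0 : A), b)) := by
        intro a b x
        have h1 := bB2 a b x
        have h2 := mp2 x a b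
        simp only [hLR, LinearMap.sub_apply, LinearMap.neg_apply, map_add, map_sub, map_neg,
          LinearMap.add_apply] at h1 h2
        simp only [hbrP, hΦ, map_zero, LinearMap.zero_apply, add_zero, zero_add, neg_zero,
          sub_zero, zero_sub, map_add, map_sub, map_neg, LinearMap.add_apply,
          LinearMap.sub_apply, LinearMap.neg_apply, Prod.mk_add_mk, Prod.mk.injEq]
        constructor
        · rw [← sub_eq_zero] at h1 ⊢; rw [← h1]; try abel
        · rw [← sub_eq_zero] at h2 ⊢; rw [← h2]; try abel
      have pADD : ∀ (a b : A →ₗ[K] K) (x : A),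
          brP (Φ (x, 0)) (brP ((0 : A), a) ((0 : A), b))
            = brP (brP (x, 0) ((0 : A), a)) (Φ ((0 : A), b))
              + brP (Φ ((0 : A), a)) (brP (x, 0) ((0 : A), b)) := by
        intro a b x
        have h1 := bB3 a b x
        have h2 := mp1 x a b
        simp only [hLR, LinearMap.sub_apply, LinearMap.neg_apply, map_add, map_sub, map_neg,
          LinearMap.add_apply] at h1 h2
        simp only [hbrP, hΦ, map_zero, LinearMap.zero_apply, add_zero, zero_add, neg_zero,
          sub_zero, zero_sub, map_add, map_sub, map_neg, LinearMap.add_apply,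
          LinearMap.sub_apply, LinearMap.neg_apply, Prod.mk_add_mk, Prod.mk.injEq]
        constructor
        · rw [← sub_eq_zero] at h1 ⊢; rw [← h1]; try abel
        · rw [← sub_eq_zero] at h2 ⊢; rw [← h2]; try abel
      intro u w z
      have e : ∀ p : A × (A →ₗ[K] K), p = (p.1, 0) + ((0 : A), p.2) := by
        intro p; ext <;> simp
      rw [e u, e w, e z]
      exact Paddu _ _ _ _
        (Paddw _ _ _ _
          (Paddz _ _ _ _ (pAAA u.1 w.1 z.1) (pAAD u.1 w.1 z.2))
          (Paddz _ _ _ _ (pADA u.1 z.1 w.2) (pADD w.2 z.2 u.1)))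
        (Paddw _ _ _ _
          (Paddz _ _ _ _ (pDAA w.1 z.1 u.2) (pDAD u.2 z.2 w.1))
          (Paddz _ _ _ _ (pDDA u.2 w.2 z.1) (pDDD u.2 w.2 z.2)))
    · -- invariance of the bilinear form (always true)
      intro u v w
      simp only [hBf, hΦ, hbrP, map_add, map_sub, map_neg, LinearMap.add_apply,
        LinearMap.sub_apply, LinearMap.neg_apply, Prod.fst_add, Prod.snd_add,
        hLa, hRa, hLb, hRb]
      ring
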